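/- arXiv:2005.14083 — 2 statements merged into one kernel-verified Lean document; each statement's English description precedes it below -/
import Mathlib

section
/- Let g(x; ξ) = e^{-(x-μ)²/(2σ²)} - e^{-(ξx-μ)²/(2σ²)} with σ > 0, expanded as g(x; ξ) = Σ_{n≥0} c_n(ξ) ψ_n(x; μ, σ) in the orthonormal Hermite-Gaussian basis. Then for ε = ξ - 1 and all k ≥ 1, c_k(ε) = -√(σ k! 2^k / √π) · Σ_{m=0}^{⌊k/2⌋} [(-1)^m / (4^m m! (k-2m)!)] · I_{k-2m}(1 + ε + ε²/2, (εμ/σ)(1+ε), (εμ/σ)²/2). -/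
open Real MeasureTheory Polynomial
open scoped Nat

/-- Gaussian moment integrals `I_k(a,b,c) = ∫ u^k e^{-(a u² + b u + c)} du`. -/
noncomputable def gaussI (k : ℕ) (a b c : ℝ) : ℝ :=
  ∫ u : ℝ, u ^ k * Real.exp (-(a * u ^ 2 + b * u + c))

/-- The `n`-th physicist's Hermite polynomial, via the Rodrigues formula. -/
noncomputable def physHermite (n : ℕ) (x : ℝ) : ℝ :=
  (-1 : ℝ) ^ n * Real.exp (x ^ 2) * iteratedDeriv n (fun t : ℝ => Real.exp (-t ^ 2)) x

/-- The generalized Hermite-Gaussian function `ψ_n(x; μ, σ)`. -/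
noncomputable def hermiteGaussian (n : ℕ) (μ σ x : ℝ) : ℝ :=
  (Real.sqrt (σ * 2 ^ n * n.factorial * Real.sqrt Real.pi))⁻¹ *
    physHermite n ((x - μ) / σ) * Real.exp (-(x - μ) ^ 2 / (2 * σ ^ 2))

/-- The difference between a Gaussian and its Doppler-shifted version. -/
noncomputable def dopplerDiff (μ σ ξ x : ℝ) : ℝ :=
  Real.exp (-(x - μ) ^ 2 / (2 * σ ^ 2)) - Real.exp (-(ξ * x - μ) ^ 2 / (2 * σ ^ 2))

/-- The Hermite-Gaussian expansion coefficients `c_n(ξ)` of `g(·; ξ)`. -/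
noncomputable def hgCoeff (n : ℕ) (μ σ ξ : ℝ) : ℝ :=
  ∫ x : ℝ, hermiteGaussian n μ σ x * dopplerDiff μ σ ξ x

lemma gauss_comp (t : ℝ) : Real.exp (-t ^ 2) = (fun y => Real.exp (-(y ^ 2 / 2))) (Real.sqrt 2 * t) := by
  have : (Real.sqrt 2 * t) ^ 2 = 2 * t ^ 2 := by
    rw [mul_pow, Real.sq_sqrt (by norm_num : (2:ℝ) ≥ 0)]
  simp only [this]
  ring_nf

lemma contDiff_gauss : ContDiff ℝ ⊤ (fun y : ℝ => Real.exp (-(y ^ 2 / 2))) := by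
  apply Real.contDiff_exp.comp
  exact (contDiff_id.pow 2).div_const 2 |>.neg

lemma physHermite_eq_aeval (n : ℕ) (x : ℝ) :
    physHermite n x = (Real.sqrt 2) ^ n * aeval (Real.sqrt 2 * x) (hermite n) := by
  have h1 : (fun t : ℝ => Real.exp (-t ^ 2)) =
      (fun t : ℝ => (fun y => Real.exp (-(y ^ 2 / 2))) (Real.sqrt 2 * t)) := funext gauss_comp
  have h2 : iteratedDeriv n (fun t : ℝ => Real.exp (-t ^ 2)) x
      = (Real.sqrt 2) ^ n * iteratedDeriv n (fun y => Real.exp (-(y ^ 2 / 2))) (Real.sqrt 2 * x) := by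
    rw [h1, iteratedDeriv_comp_const_mul (contDiff_gauss.of_le le_top) (Real.sqrt 2)]
  have h3 : iteratedDeriv n (fun y => Real.exp (-(y ^ 2 / 2))) (Real.sqrt 2 * x)
      = deriv^[n] (fun y => Real.exp (-(y ^ 2 / 2))) (Real.sqrt 2 * x) := by
    rw [iteratedDeriv_eq_iterate]
  rw [physHermite, h2, h3, Polynomial.deriv_gaussian_eq_hermite_mul_gaussian]
  have h4 : Real.exp (-((Real.sqrt 2 * x) ^ 2 / 2)) = Real.exp (-x ^ 2) := by
    rw [mul_pow, Real.sq_sqrt (by norm_num : (2:ℝ) ≥ 0)]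
    ring_nf
  rw [h4]
  have h5 : rexp (x ^ 2) * rexp (-x ^ 2) = 1 := by
    rw [← Real.exp_add]; simp
  have h6 : ((-1:ℝ) ^ n) * ((-1:ℝ) ^ n) = 1 := by
    rw [← pow_add, ← two_mul, pow_mul]; norm_num
  calc (-1:ℝ) ^ n * rexp (x ^ 2) * (√2 ^ n * ((-1) ^ n * (aeval (√2 * x)) (hermite n) * rexp (-x ^ 2)))
      = ((-1:ℝ)^n * (-1:ℝ)^n) * (rexp (x^2) * rexp (-x^2)) * (√2 ^ n * (aeval (√2 * x)) (hermite n)) := by ring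
    _ = √2 ^ n * (aeval (√2 * x)) (hermite n) := by rw [h5, h6]; ring

lemma ddf_cast (m : ℕ) : ((2*m-1)‼ : ℝ) = (2*m).factorial / (2^m * m.factorial) := by
  rcases Nat.eq_zero_or_pos m with rfl | hm
  · simp
  · have h1 : (2*m).factorial = (2*m)‼ * (2*m-1)‼ := by
      have h2 : 2*m - 1 + 1 = 2*m := by omega
      rw [← h2, Nat.factorial_eq_mul_doubleFactorial, h2]
    have h3 : (2*m)‼ = 2^m * m.factorial := Nat.doubleFactorial_two_mul m
    have h4 : ((2*m).factorial : ℝ) = (2^m * m.factorial : ℕ) * ((2*m-1)‼ : ℕ) := by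
      rw [← h3]; exact_mod_cast congrArg (fun n : ℕ => (n : ℝ)) h1
    rw [eq_div_iff (by positivity)]
    push_cast at h4 ⊢
    linarith [h4]

lemma physHermite_sum (k : ℕ) (x : ℝ) :
    physHermite k x = ∑ m ∈ Finset.range (k / 2 + 1),
      ((-1:ℝ)^m * k.factorial * 2^(k - 2*m) / (m.factorial * (k - 2*m).factorial)) * x^(k - 2*m) := by
  have haev : aeval (Real.sqrt 2 * x) (hermite k)
      = ∑ j ∈ Finset.range (k + 1), ((hermite k).coeff j : ℝ) * (Real.sqrt 2 * x)^j := by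
    conv_lhs => rw [Polynomial.aeval_eq_sum_range (p := hermite k) (Real.sqrt 2 * x)]
    rw [natDegree_hermite]
    exact Finset.sum_congr rfl fun j _ => by rw [zsmul_eq_mul]
  rw [physHermite_eq_aeval, haev, Finset.mul_sum]
  have hterm : ∀ j ∈ Finset.range (k+1),
      (Real.sqrt 2)^k * (((hermite k).coeff j : ℝ) * (Real.sqrt 2 * x)^j)
      = ((hermite k).coeff j : ℝ) * (Real.sqrt 2)^(k+j) * x^j := by
    intro j _; rw [mul_pow, pow_add]; ring
  rw [Finset.sum_congr rfl hterm]
  set F : ℕ → ℝ := fun j => ((hermite k).coeff j : ℝ) * (Real.sqrt 2)^(k+j) * x^j with hF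
  have himg : ∑ j ∈ Finset.range (k+1), F j
      = ∑ j ∈ (Finset.range (k/2+1)).image (fun m => k - 2*m), F j := by
    symm
    apply Finset.sum_subset
    · intro j hj
      simp only [Finset.mem_image, Finset.mem_range] at hj
      obtain ⟨m, hm, rfl⟩ := hj
      simp only [Finset.mem_range]; omega
    · intro j hj hnot
      simp only [Finset.mem_image, Finset.mem_range, not_exists] at hj hnot
      have hodd : Odd (k + j) := by
        rcases Nat.even_or_odd (k + j) with he | ho
        · exfalso
          have hjk : j ≤ k := by omega
          have : Even (k - j) := by
            rw [Nat.even_sub hjk]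
            rw [Nat.even_add] at he
            tauto
          obtain ⟨m, hm⟩ := this
          exact hnot m ⟨by omega, by omega⟩
        · exact ho
      rw [hF]
      simp [coeff_hermite_of_odd_add hodd]
  rw [himg, Finset.sum_image]
  · apply Finset.sum_congr rfl
    intro m hm
    simp only [Finset.mem_range] at hm
    have h2m : 2*m ≤ k := by omega
    have hkeq : k = 2*m + (k - 2*m) := by omega
    have hcoeff : (hermite k).coeff (k - 2*m) = (-1)^m * (2*m-1)‼ * Nat.choose k (k - 2*m) := by
      obtain ⟨j, hj⟩ : ∃ j, k - 2*m = j := ⟨_, rfl⟩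
      rw [hj]
      have hk2 : k = 2*m + j := by omega
      subst hk2
      exact coeff_hermite_explicit m j
    have hpow : (Real.sqrt 2)^(k + (k - 2*m)) = 2^(k - m) := by
      have h5 : k + (k - 2*m) = 2*(k - m) := by omega
      rw [h5, pow_mul, Real.sq_sqrt (by norm_num : (2:ℝ) ≥ 0)]
    have hchoose : (Nat.choose k (k - 2*m) : ℝ)
        = k.factorial / ((k - 2*m).factorial * (2*m).factorial) := by
      rw [Nat.cast_choose ℝ (by omega : k - 2*m ≤ k)]
      have h6 : k - (k - 2*m) = 2*m := by omega
      rw [h6]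
    rw [hF]
    simp only [hcoeff, hpow]
    push_cast
    rw [ddf_cast, hchoose]
    have hpw2 : (2:ℝ)^(k-m) = 2^(k-2*m) * 2^m := by
      rw [← pow_add]; congr 1; omega
    rw [hpw2]
    have hfacne : ((2*m).factorial : ℝ) ≠ 0 := by positivity
    have hmne : (m.factorial : ℝ) ≠ 0 := by positivity
    have hkne : ((k-2*m).factorial : ℝ) ≠ 0 := by positivity
    field_simp
  · intro m₁ hm₁ m₂ hm₂ heq
    simp only [Finset.mem_coe, Finset.mem_range] at hm₁ hm₂
    simp only at heq
    omega

lemma integrable_pow_mul_gauss {a : ℝ} (ha : 0 < a) (l : ℕ) :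
    Integrable fun v : ℝ => v ^ l * Real.exp (-(a * v ^ 2)) := by
  have := integrable_rpow_mul_exp_neg_mul_sq ha (s := (l : ℝ))
    (by exact_mod_cast neg_one_lt_zero.trans_le (Nat.cast_nonneg l))
  simpa [Real.rpow_natCast, neg_mul] using this

lemma integrable_pow_gauss (j : ℕ) {a : ℝ} (ha : 0 < a) (b c : ℝ) :
    Integrable fun u : ℝ => u ^ j * Real.exp (-(a * u ^ 2 + b * u + c)) := by
  set d : ℝ := b / (2 * a) with hd
  have hsq : ∀ u : ℝ, -(a * u ^ 2 + b * u + c) = -(a * (u + d) ^ 2) + (b ^ 2 / (4 * a) - c) := by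
    intro u
    have ha' : (a : ℝ) ≠ 0 := ne_of_gt ha
    rw [hd]
    field_simp
    ring
  have hg : Integrable fun v : ℝ => (v - d) ^ j * Real.exp (-(a * v ^ 2)) := by
    have heq : (fun v : ℝ => (v - d) ^ j * Real.exp (-(a * v ^ 2)))
        = fun v : ℝ => ∑ i ∈ Finset.range (j + 1),
            ((-d) ^ (j - i) * (j.choose i : ℝ)) * (v ^ i * Real.exp (-(a * v ^ 2))) := by
      funext v
      rw [sub_eq_add_neg, add_pow, Finset.sum_mul]
      exact Finset.sum_congr rfl fun i _ => by ring
    rw [heq]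
    exact integrable_finset_sum _ fun i _ => (integrable_pow_mul_gauss ha i).const_mul _
  have hcomp := (hg.comp_sub_right (-d)).const_mul (Real.exp (b ^ 2 / (4 * a) - c))
  apply hcomp.congr
  filter_upwards with u
  simp only [sub_neg_eq_add, add_sub_cancel_right]
  rw [hsq u, Real.exp_add]
  ring

lemma integrable_physHermite_gauss (k : ℕ) {a : ℝ} (ha : 0 < a) (b c : ℝ) :
    Integrable fun u : ℝ => physHermite k u * Real.exp (-(a * u ^ 2 + b * u + c)) := by
  have heq : (fun u : ℝ => physHermite k u * Real.exp (-(a * u ^ 2 + b * u + c)))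
      = fun u : ℝ => ∑ m ∈ Finset.range (k / 2 + 1),
          ((-1:ℝ)^m * k.factorial * 2^(k - 2*m) / (m.factorial * (k - 2*m).factorial)) *
            (u ^ (k - 2*m) * Real.exp (-(a * u ^ 2 + b * u + c))) := by
    funext u
    rw [physHermite_sum, Finset.sum_mul]
    exact Finset.sum_congr rfl fun m _ => by ring
  rw [heq]
  exact integrable_finset_sum _ fun m _ => (integrable_pow_gauss _ ha b c).const_mul _

lemma tendsto_pow_gauss_atTop (n : ℕ) :
    Filter.Tendsto (fun u : ℝ => u ^ n * Real.exp (-u ^ 2)) Filter.atTop (nhds 0) := by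
  have hlin : Filter.Tendsto (fun x : ℝ => -(1/2) * x) Filter.atTop Filter.atBot := by
    apply Filter.Tendsto.const_mul_atTop_of_neg (by norm_num : -(1/2 : ℝ) < 0) Filter.tendsto_id
  have hexp : Filter.Tendsto (fun x : ℝ => Real.exp (-(1/2) * x)) Filter.atTop (nhds 0) :=
    Real.tendsto_exp_atBot.comp hlin
  have h := (rpow_mul_exp_neg_mul_sq_isLittleO_exp_neg (b := 1) one_pos (n : ℝ)).trans_tendsto
    hexp
  have heq : (fun x : ℝ => x ^ (n : ℝ) * Real.exp (-1 * x ^ 2))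
      = fun u : ℝ => u ^ n * Real.exp (-u ^ 2) := by
    funext x; rw [Real.rpow_natCast]; ring_nf
  rwa [heq] at h

lemma tendsto_pow_gauss_atBot (n : ℕ) :
    Filter.Tendsto (fun u : ℝ => u ^ n * Real.exp (-u ^ 2)) Filter.atBot (nhds 0) := by
  have h := (tendsto_pow_gauss_atTop n).comp Filter.tendsto_neg_atBot_atTop
  have h2 := h.const_mul ((-1 : ℝ) ^ n)
  rw [mul_zero] at h2
  apply h2.congr
  intro u
  show (-1:ℝ) ^ n * ((-u) ^ n * Real.exp (-(-u) ^ 2)) = u ^ n * Real.exp (-u ^ 2)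
  have hnp : (-u : ℝ) ^ n = (-1) ^ n * u ^ n := neg_pow u n
  have h2 : ((-1:ℝ) ^ n) * ((-1:ℝ) ^ n) = 1 := by
    rw [← pow_add, ← two_mul, pow_mul]; norm_num
  rw [hnp, neg_sq]
  calc (-1:ℝ) ^ n * ((-1) ^ n * u ^ n * Real.exp (-u ^ 2))
      = ((-1:ℝ)^n * (-1)^n) * (u ^ n * Real.exp (-u ^ 2)) := by ring
    _ = _ := by rw [h2]; ring

lemma tendsto_physHermite_gauss (j : ℕ) (l : Filter ℝ)
    (hl : ∀ n : ℕ, Filter.Tendsto (fun u : ℝ => u ^ n * Real.exp (-u ^ 2)) l (nhds 0)) :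
    Filter.Tendsto (fun u : ℝ => physHermite j u * Real.exp (-u ^ 2)) l (nhds 0) := by
  have heq : (fun u : ℝ => physHermite j u * Real.exp (-u ^ 2))
      = fun u : ℝ => ∑ m ∈ Finset.range (j / 2 + 1),
          ((-1:ℝ)^m * j.factorial * 2^(j - 2*m) / (m.factorial * (j - 2*m).factorial)) *
            (u ^ (j - 2*m) * Real.exp (-u ^ 2)) := by
    funext u
    rw [physHermite_sum, Finset.sum_mul]
    exact Finset.sum_congr rfl fun m _ => by ring
  rw [heq]
  have : Filter.Tendsto (fun u : ℝ => ∑ m ∈ Finset.range (j / 2 + 1),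
      ((-1:ℝ)^m * j.factorial * 2^(j - 2*m) / (m.factorial * (j - 2*m).factorial)) *
        (u ^ (j - 2*m) * Real.exp (-u ^ 2))) l
      (nhds (∑ m ∈ Finset.range (j / 2 + 1), ((-1:ℝ)^m * j.factorial * 2^(j - 2*m) /
        (m.factorial * (j - 2*m).factorial)) * 0)) :=
    tendsto_finset_sum _ fun m _ => ((hl (j - 2*m)).const_mul _)
  simpa using this

lemma iteratedDeriv_gauss_eq (j : ℕ) (u : ℝ) :
    iteratedDeriv j (fun t : ℝ => Real.exp (-t ^ 2)) u
      = (-1:ℝ)^j * physHermite j u * Real.exp (-u ^ 2) := by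
  rw [physHermite]
  have h1 : Real.exp (u ^ 2) * Real.exp (-u ^ 2) = 1 := by rw [← Real.exp_add]; simp
  have h2 : ((-1:ℝ) ^ j) * ((-1:ℝ) ^ j) = 1 := by
    rw [← pow_add, ← two_mul, pow_mul]; norm_num
  calc iteratedDeriv j (fun t : ℝ => Real.exp (-t ^ 2)) u
      = (((-1:ℝ)^j * ((-1:ℝ)^j)) * (Real.exp (u^2) * Real.exp (-u^2))) *
          iteratedDeriv j (fun t : ℝ => Real.exp (-t ^ 2)) u := by rw [h1, h2]; ring
    _ = _ := by ring

lemma contDiff_gauss2 : ContDiff ℝ ⊤ (fun t : ℝ => Real.exp (-t ^ 2)) := by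
  apply Real.contDiff_exp.comp
  exact (contDiff_id.pow 2).neg

lemma integral_physHermite_gauss_zero {k : ℕ} (hk : 1 ≤ k) :
    ∫ u : ℝ, physHermite k u * Real.exp (-u ^ 2) = 0 := by
  obtain ⟨j, rfl⟩ : ∃ j, k = j + 1 := ⟨k - 1, by omega⟩
  set f : ℝ → ℝ := fun t => Real.exp (-t ^ 2) with hf
  set F : ℝ → ℝ := iteratedDeriv j f with hFdef
  have hdiffF : Differentiable ℝ F :=
    contDiff_gauss2.differentiable_iteratedDeriv j (by simp)
  have hderiv : ∀ x : ℝ, HasDerivAt F (iteratedDeriv (j+1) f x) x := by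
    intro x
    rw [iteratedDeriv_succ]
    exact (hdiffF x).hasDerivAt
  have hint : Integrable (fun u : ℝ => iteratedDeriv (j+1) f u) := by
    apply ((integrable_physHermite_gauss (j+1) one_pos 0 0).const_mul ((-1:ℝ)^(j+1))).congr
    filter_upwards with u
    rw [iteratedDeriv_gauss_eq]
    norm_num
    ring
  have hsign : ∀ u : ℝ, F u = (-1:ℝ)^j * (physHermite j u * Real.exp (-u ^ 2)) := by
    intro u
    rw [hFdef, iteratedDeriv_gauss_eq]
    ring
  have hFtop : Filter.Tendsto F Filter.atTop (nhds 0) := by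
    have := (tendsto_physHermite_gauss j Filter.atTop tendsto_pow_gauss_atTop).const_mul
      ((-1:ℝ)^j)
    rw [mul_zero] at this
    exact this.congr fun u => (hsign u).symm
  have hFbot : Filter.Tendsto F Filter.atBot (nhds 0) := by
    have := (tendsto_physHermite_gauss j Filter.atBot tendsto_pow_gauss_atBot).const_mul
      ((-1:ℝ)^j)
    rw [mul_zero] at this
    exact this.congr fun u => (hsign u).symm
  have hIic : ∫ x in Set.Iic (0:ℝ), iteratedDeriv (j+1) f x = F 0 - 0 :=
    integral_Iic_of_hasDerivAt_of_tendsto hdiffF.continuous.continuousWithinAt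
      (fun x _ => hderiv x) hint.integrableOn hFbot
  have hIoi : ∫ x in Set.Ioi (0:ℝ), iteratedDeriv (j+1) f x = 0 - F 0 :=
    integral_Ioi_of_hasDerivAt_of_tendsto hdiffF.continuous.continuousWithinAt
      (fun x _ => hderiv x) hint.integrableOn hFtop
  have htotal : ∫ u : ℝ, iteratedDeriv (j+1) f u = 0 := by
    rw [← integral_add_compl measurableSet_Iic hint, Set.compl_Iic, hIic, hIoi]
    ring
  have hrw : (fun u : ℝ => physHermite (j+1) u * Real.exp (-u ^ 2))
      = fun u : ℝ => (-1:ℝ)^(j+1) * iteratedDeriv (j+1) f u := by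
    funext u
    rw [iteratedDeriv_gauss_eq]
    have h2 : ((-1:ℝ) ^ (j+1)) * ((-1:ℝ) ^ (j+1)) = 1 := by
      rw [← pow_add, ← two_mul, pow_mul]; norm_num
    calc physHermite (j+1) u * Real.exp (-u ^ 2)
        = ((-1:ℝ)^(j+1) * (-1:ℝ)^(j+1)) * (physHermite (j+1) u * Real.exp (-u ^ 2)) := by
          rw [h2]; ring
      _ = _ := by ring
  rw [hrw, integral_const_mul, htotal, mul_zero]


theorem hgCoeff_pos (μ σ ε : ℝ) (hσ : 0 < σ) (k : ℕ) (hk : 1 ≤ k) :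
    hgCoeff k μ σ (1 + ε) =
      -Real.sqrt (σ * k.factorial * 2 ^ k / Real.sqrt Real.pi) *
        ∑ m ∈ Finset.range (k / 2 + 1),
          (-1 : ℝ) ^ m / (4 ^ m * m.factorial * (k - 2 * m).factorial) *
            gaussI (k - 2 * m) (1 + ε + ε ^ 2 / 2) ((ε * μ / σ) * (1 + ε))
              ((ε * μ / σ) ^ 2 / 2) := by
  have hσ' : σ ≠ 0 := ne_of_gt hσ
  set N : ℝ := (Real.sqrt (σ * 2 ^ k * k.factorial * Real.sqrt Real.pi))⁻¹ with hN
  set t : ℝ := ε * μ / σ with ht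
  set a : ℝ := 1 + ε + ε ^ 2 / 2 with had
  set b : ℝ := t * (1 + ε) with hbd
  set c : ℝ := t ^ 2 / 2 with hcd
  have ha : 0 < a := by rw [had]; nlinarith [sq_nonneg (1 + ε)]
  set G : ℝ → ℝ := fun x => hermiteGaussian k μ σ x * dopplerDiff μ σ (1 + ε) x with hG
  -- Step 1: substitution x = σ u + μ
  have hsub : hgCoeff k μ σ (1 + ε) = σ * ∫ u : ℝ, G (σ * u + μ) := by
    have h1 : ∫ u : ℝ, G (σ * u + μ) = |σ⁻¹| • ∫ y : ℝ, G (y + μ) :=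
      MeasureTheory.Measure.integral_comp_mul_left (fun y => G (y + μ)) σ
    have h2 : ∫ y : ℝ, G (y + μ) = ∫ x : ℝ, G x := integral_add_right_eq_self G μ
    rw [hgCoeff]
    rw [show (∫ x : ℝ, hermiteGaussian k μ σ x * dopplerDiff μ σ (1+ε) x) = ∫ x : ℝ, G x from rfl]
    rw [h1, h2, abs_of_pos (inv_pos.mpr hσ), smul_eq_mul]
    field_simp
  -- Step 2: the integrand after substitution
  have hGu : ∀ u : ℝ, G (σ * u + μ) =
      N * (physHermite k u * Real.exp (-u ^ 2)
        - physHermite k u * Real.exp (-(a * u ^ 2 + b * u + c))) := by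
    intro u
    have harg : (σ * u + μ - μ) / σ = u := by field_simp; ring
    have hexp1 : -(σ * u + μ - μ) ^ 2 / (2 * σ ^ 2) = -u ^ 2 / 2 := by
      field_simp; ring
    have hexp2 : -((1 + ε) * (σ * u + μ) - μ) ^ 2 / (2 * σ ^ 2)
        = -((1 + ε) * u + t) ^ 2 / 2 := by
      rw [ht]
      have : (1 + ε) * (σ * u + μ) - μ = σ * ((1 + ε) * u + ε * μ / σ) := by
        field_simp; ring
      have h9 : ((1 + ε) * (σ * u + μ) - μ) ^ 2 = σ ^ 2 * ((1 + ε) * u + ε * μ / σ) ^ 2 := by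
        rw [this]; ring
      rw [h9, neg_div, neg_div]
      congr 1
      calc σ ^ 2 * ((1 + ε) * u + ε * μ / σ) ^ 2 / (2 * σ ^ 2)
          = (((1 + ε) * u + ε * μ / σ) ^ 2 / 2) * (σ ^ 2 / σ ^ 2) := by ring
        _ = ((1 + ε) * u + ε * μ / σ) ^ 2 / 2 := by
            rw [div_self (pow_ne_zero 2 hσ')]; ring
    simp only [hG, hermiteGaussian, dopplerDiff]
    rw [harg, hexp1, hexp2]
    have hc1 : Real.exp (-u ^ 2 / 2) * Real.exp (-u ^ 2 / 2) = Real.exp (-u ^ 2) := by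
      rw [← Real.exp_add]; congr 1; ring
    have hc2 : Real.exp (-u ^ 2 / 2) * Real.exp (-((1 + ε) * u + t) ^ 2 / 2)
        = Real.exp (-(a * u ^ 2 + b * u + c)) := by
      rw [← Real.exp_add]; congr 1; rw [had, hbd, hcd]; ring
    rw [← hN]
    rw [mul_sub, mul_sub]
    rw [show N * physHermite k u * Real.exp (-u^2/2) * Real.exp (-u^2/2)
        = N * (physHermite k u * (Real.exp (-u^2/2) * Real.exp (-u^2/2))) by ring, hc1]
    rw [show N * physHermite k u * Real.exp (-u^2/2) * Real.exp (-((1+ε)*u + t)^2/2)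
        = N * (physHermite k u * (Real.exp (-u^2/2) * Real.exp (-((1+ε)*u + t)^2/2))) by ring, hc2]
  -- Step 3: split
  have hintA : Integrable (fun u : ℝ => physHermite k u * Real.exp (-u ^ 2)) := by
    apply (integrable_physHermite_gauss k one_pos 0 0).congr
    filter_upwards with u
    norm_num
  have hintB : Integrable (fun u : ℝ => physHermite k u * Real.exp (-(a * u ^ 2 + b * u + c))) :=
    integrable_physHermite_gauss k ha b c
  have hsplit : ∫ u : ℝ, G (σ * u + μ)
      = -(N * ∫ u : ℝ, physHermite k u * Real.exp (-(a * u ^ 2 + b * u + c))) := by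
    rw [show (fun u : ℝ => G (σ * u + μ)) = fun u : ℝ =>
      N * (physHermite k u * Real.exp (-u ^ 2)
        - physHermite k u * Real.exp (-(a * u ^ 2 + b * u + c))) from funext hGu]
    rw [integral_const_mul, integral_sub hintA hintB, integral_physHermite_gauss_zero hk]
    ring
  -- Step 4: expand
  have hexpand : ∫ u : ℝ, physHermite k u * Real.exp (-(a * u ^ 2 + b * u + c))
      = ∑ m ∈ Finset.range (k / 2 + 1),
          ((-1:ℝ)^m * k.factorial * 2^(k - 2*m) / (m.factorial * (k - 2*m).factorial)) *
            gaussI (k - 2*m) a b c := by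
    rw [show (fun u : ℝ => physHermite k u * Real.exp (-(a * u ^ 2 + b * u + c)))
        = fun u : ℝ => ∑ m ∈ Finset.range (k / 2 + 1),
          ((-1:ℝ)^m * k.factorial * 2^(k - 2*m) / (m.factorial * (k - 2*m).factorial)) *
            (u ^ (k - 2*m) * Real.exp (-(a * u ^ 2 + b * u + c))) by
      funext u
      rw [physHermite_sum, Finset.sum_mul]
      exact Finset.sum_congr rfl fun m _ => by ring]
    rw [MeasureTheory.integral_finset_sum _
      (fun m _ => (integrable_pow_gauss _ ha b c).const_mul _)]
    exact Finset.sum_congr rfl fun m _ => by rw [integral_const_mul, gaussI]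
  -- Step 5: constants
  have hsqpi : (0:ℝ) < Real.sqrt Real.pi := Real.sqrt_pos.mpr Real.pi_pos
  set X : ℝ := σ * 2 ^ k * k.factorial * Real.sqrt Real.pi with hX
  have hXpos : 0 < X := by
    rw [hX]
    have : (0:ℝ) < (k.factorial : ℝ) := by exact_mod_cast k.factorial_pos
    positivity
  have hsX : (0:ℝ) < Real.sqrt X := Real.sqrt_pos.mpr hXpos
  have hkf : (0:ℝ) < (k.factorial : ℝ) := by exact_mod_cast k.factorial_pos
  have hS : Real.sqrt (σ * k.factorial * 2 ^ k / Real.sqrt Real.pi)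
      = σ * k.factorial * 2 ^ k / Real.sqrt X := by
    have h1 : σ * (k.factorial : ℝ) * 2 ^ k / Real.sqrt Real.pi
        = (σ * k.factorial * 2 ^ k) ^ 2 / X := by
      rw [hX]
      field_simp
    rw [h1, Real.sqrt_div (sq_nonneg _), Real.sqrt_sq (by positivity)]
  rw [hsub, hsplit, hexpand, Finset.mul_sum, ← Finset.sum_neg_distrib, Finset.mul_sum, Finset.mul_sum]
  apply Finset.sum_congr rfl
  intro m hm
  simp only [Finset.mem_range] at hm
  have h2m : 2 * m ≤ k := by omega
  have hmf : (0:ℝ) < (m.factorial : ℝ) := by exact_mod_cast m.factorial_pos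
  have hkmf : (0:ℝ) < ((k - 2*m).factorial : ℝ) := by exact_mod_cast (k - 2*m).factorial_pos
  have hpow : (2:ℝ) ^ (k - 2*m) * 4 ^ m = 2 ^ k := by
    rw [show (4:ℝ) = 2^2 by norm_num, ← pow_mul, ← pow_add]
    congr 1
    omega
  have key : σ * N * ((-1:ℝ)^m * k.factorial * 2^(k - 2*m) / (m.factorial * (k - 2*m).factorial))
      = Real.sqrt (σ * k.factorial * 2 ^ k / Real.sqrt Real.pi)
        * ((-1:ℝ)^m / (4^m * m.factorial * (k - 2*m).factorial)) := by
    rw [hS, hN]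
    have hsXne : Real.sqrt X ≠ 0 := ne_of_gt hsX
    have hne1 : (m.factorial : ℝ) ≠ 0 := ne_of_gt hmf
    have hne2 : ((k - 2*m).factorial : ℝ) ≠ 0 := ne_of_gt hkmf
    have hne4 : (4:ℝ)^m ≠ 0 := by positivity
    field_simp
    rw [← hpow]
  calc σ * -(N * ((-1:ℝ)^m * k.factorial * 2^(k - 2*m) / (m.factorial * (k - 2*m).factorial)
        * gaussI (k - 2*m) a b c))
      = -(σ * N * ((-1:ℝ)^m * k.factorial * 2^(k - 2*m) / (m.factorial * (k - 2*m).factorial)))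
          * gaussI (k - 2*m) a b c := by ring
    _ = _ := by rw [key]; ring
end

section
/- For σ > 0 and μ ∈ ℝ, let g(x; ξ) = e^{-(x-μ)²/(2σ²)} - e^{-(ξx-μ)²/(2σ²)} and let c_1(ξ) = ∫_{-∞}^{∞} ψ_1(x; μ, σ) g(x; ξ) dx where ψ_1 is the first-degree Hermite-Gaussian function. Then lim_{ξ→1} c_1(ξ)² / ∫_{-∞}^{∞} g(x;ξ)² dx = 1 / (1 + 3σ²/(2μ²)), provided μ ≠ 0. -/
open Real MeasureTheory

lemma integral_x_gauss (c : ℝ) : ∫ x : ℝ, x * Real.exp (-(c * x ^ 2)) = 0 := by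
  have h : (∫ x : ℝ, (fun y : ℝ => y * Real.exp (-(c * y ^ 2))) (-x)) =
      ∫ x : ℝ, x * Real.exp (-(c * x ^ 2)) :=
    integral_neg_eq_self (μ := volume) (fun y : ℝ => y * Real.exp (-(c * y ^ 2)))
  simp only [neg_sq, neg_mul] at h
  rw [integral_neg] at h
  linarith

lemma integrable_gauss_shift {c : ℝ} (hc : 0 < c) (x₀ : ℝ) :
    Integrable (fun x : ℝ => Real.exp (-(c * (x - x₀) ^ 2))) := by
  have := (integrable_exp_neg_mul_sq hc).comp_sub_right x₀
  simpa only [neg_mul] using this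

lemma integrable_x_gauss_shift {c : ℝ} (hc : 0 < c) (x₀ : ℝ) :
    Integrable (fun x : ℝ => (x - x₀) * Real.exp (-(c * (x - x₀) ^ 2))) := by
  have := (integrable_mul_exp_neg_mul_sq hc).comp_sub_right x₀
  simpa only [neg_mul] using this

lemma integrable_linear_gauss {c : ℝ} (hc : 0 < c) (p q x₀ : ℝ) :
    Integrable (fun x : ℝ => (p + q * x) * Real.exp (-(c * (x - x₀) ^ 2))) := by
  have h : ∀ x : ℝ, (p + q * x) * Real.exp (-(c * (x - x₀) ^ 2))
      = (p + q * x₀) * Real.exp (-(c * (x - x₀) ^ 2))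
        + q * ((x - x₀) * Real.exp (-(c * (x - x₀) ^ 2))) := by
    intro x; ring
  simp only [h]
  exact ((integrable_gauss_shift hc x₀).const_mul _).add
    ((integrable_x_gauss_shift hc x₀).const_mul _)

lemma integral_gauss_shift {c : ℝ} (hc : 0 < c) (x₀ : ℝ) :
    ∫ x : ℝ, Real.exp (-(c * (x - x₀) ^ 2)) = Real.sqrt (π / c) := by
  rw [← integral_add_right_eq_self (fun x : ℝ => Real.exp (-(c * (x - x₀) ^ 2))) x₀]
  simp only [add_sub_cancel_right]
  simpa only [neg_mul] using integral_gaussian c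

lemma integral_linear_gauss {c : ℝ} (hc : 0 < c) (p q x₀ : ℝ) :
    ∫ x : ℝ, (p + q * x) * Real.exp (-(c * (x - x₀) ^ 2)) = (p + q * x₀) * Real.sqrt (π / c) := by
  rw [← integral_add_right_eq_self (fun x : ℝ => (p + q * x) * Real.exp (-(c * (x - x₀) ^ 2))) x₀]
  have h : ∀ x : ℝ, (p + q * (x + x₀)) * Real.exp (-(c * (x + x₀ - x₀) ^ 2))
      = (p + q * x₀) * Real.exp (-(c * x ^ 2)) + q * (x * Real.exp (-(c * x ^ 2))) := by
    intro x; rw [add_sub_cancel_right]; ring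
  simp only [h]
  rw [integral_add (by simpa only [neg_mul] using (integrable_exp_neg_mul_sq hc).const_mul (p + q * x₀))
    (by simpa only [neg_mul] using (integrable_mul_exp_neg_mul_sq hc).const_mul q),
    integral_const_mul, integral_const_mul, integral_x_gauss]
  rw [show ∫ x : ℝ, Real.exp (-(c * x ^ 2)) = Real.sqrt (π / c) by
    simpa only [neg_mul] using integral_gaussian c]
  ring

lemma physHermite_one (x : ℝ) : physHermite 1 x = 2 * x := by
  have hd : HasDerivAt (fun t : ℝ => Real.exp (-t ^ 2)) (Real.exp (-x ^ 2) * (-(2 * x))) x := by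
    have h1 : HasDerivAt (fun t : ℝ => -t ^ 2) (-(2 * x)) x := by
      simpa using ((hasDerivAt_pow 2 x).fun_neg)
    exact h1.exp
  rw [physHermite, iteratedDeriv_one, hd.deriv]
  have h2 : Real.exp (x ^ 2) * Real.exp (-x ^ 2) = 1 := by
    rw [← Real.exp_add]; norm_num
  simp only [pow_one]
  linear_combination (2 * x) * h2

lemma hgCoeff_one_eq (μ σ : ℝ) (hσ : 0 < σ) (ξ : ℝ) :
    hgCoeff 1 μ σ ξ = -(2 * (Real.sqrt (σ * 2 * Real.sqrt π))⁻¹ / σ *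
      Real.exp (-(μ ^ 2 * (1 - ξ) ^ 2 / (2 * σ ^ 2 * (1 + ξ ^ 2)))) *
      ((-μ + 1 * (μ * (1 + ξ) / (1 + ξ ^ 2))) *
        Real.sqrt (π / ((1 + ξ ^ 2) / (2 * σ ^ 2))))) := by
  have h1ξ : (0:ℝ) < 1 + ξ ^ 2 := by positivity
  have hσ2 : (0:ℝ) < σ ^ 2 := by positivity
  set C : ℝ := (Real.sqrt (σ * 2 * Real.sqrt π))⁻¹ with hC
  set A : ℝ := (1 + ξ ^ 2) / (2 * σ ^ 2) with hA
  set X : ℝ := μ * (1 + ξ) / (1 + ξ ^ 2) with hX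
  set Kc : ℝ := μ ^ 2 * (1 - ξ) ^ 2 / (2 * σ ^ 2 * (1 + ξ ^ 2)) with hKc
  have hconst : (Real.sqrt (σ * 2 ^ 1 * ((1:ℕ).factorial : ℝ) * Real.sqrt π))⁻¹ = C := by
    have h : σ * 2 ^ 1 * ((1:ℕ).factorial : ℝ) * Real.sqrt π = σ * 2 * Real.sqrt π := by
      norm_num [Nat.factorial]
    rw [h]
  have key : ∀ x : ℝ, hermiteGaussian 1 μ σ x * dopplerDiff μ σ ξ x =
      2 * C / σ * ((-μ + 1 * x) * Real.exp (-(1 / σ ^ 2 * (x - μ) ^ 2)))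
      - 2 * C / σ * Real.exp (-Kc) * ((-μ + 1 * x) * Real.exp (-(A * (x - X) ^ 2))) := by
    intro x
    rw [hermiteGaussian, dopplerDiff, physHermite_one, hconst]
    have e1 : Real.exp (-(x - μ) ^ 2 / (2 * σ ^ 2)) * Real.exp (-(x - μ) ^ 2 / (2 * σ ^ 2))
        = Real.exp (-(1 / σ ^ 2 * (x - μ) ^ 2)) := by
      rw [← Real.exp_add]; congr 1; field_simp; ring
    have e2 : Real.exp (-(x - μ) ^ 2 / (2 * σ ^ 2)) * Real.exp (-(ξ * x - μ) ^ 2 / (2 * σ ^ 2))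
        = Real.exp (-Kc) * Real.exp (-(A * (x - X) ^ 2)) := by
      rw [← Real.exp_add, ← Real.exp_add]; congr 1; rw [hKc, hA, hX]; field_simp; ring
    linear_combination (2 * C * (x - μ) / σ) * e1 - (2 * C * (x - μ) / σ) * e2
  have hc1 : (0:ℝ) < 1 / σ ^ 2 := by positivity
  have hc2 : (0:ℝ) < A := by rw [hA]; positivity
  rw [hgCoeff]
  simp only [key]
  rw [integral_sub
      (((integrable_linear_gauss hc1 (-μ) 1 μ).const_mul (2 * C / σ)))
      (((integrable_linear_gauss hc2 (-μ) 1 X).const_mul (2 * C / σ * Real.exp (-Kc)))),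
    integral_const_mul, integral_const_mul, integral_linear_gauss hc1, integral_linear_gauss hc2]
  ring

lemma norm_sq_eq (μ σ : ℝ) (hσ : 0 < σ) {ξ : ℝ} (hξ : 0 < ξ) :
    ∫ x : ℝ, (dopplerDiff μ σ ξ x) ^ 2
      = Real.sqrt (π / (1 / σ ^ 2)) + ξ⁻¹ * Real.sqrt (π / (1 / σ ^ 2))
        - 2 * (Real.exp (-(μ ^ 2 * (1 - ξ) ^ 2 / (2 * σ ^ 2 * (1 + ξ ^ 2)))) *
            Real.sqrt (π / ((1 + ξ ^ 2) / (2 * σ ^ 2)))) := by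
  have h1ξ : (0:ℝ) < 1 + ξ ^ 2 := by positivity
  have hσ2 : (0:ℝ) < σ ^ 2 := by positivity
  set A : ℝ := (1 + ξ ^ 2) / (2 * σ ^ 2) with hA
  set X : ℝ := μ * (1 + ξ) / (1 + ξ ^ 2) with hX
  set Kc : ℝ := μ ^ 2 * (1 - ξ) ^ 2 / (2 * σ ^ 2 * (1 + ξ ^ 2)) with hKc
  have hc1 : (0:ℝ) < 1 / σ ^ 2 := by positivity
  have hc2 : (0:ℝ) < A := by rw [hA]; positivity
  have key : ∀ x : ℝ, (dopplerDiff μ σ ξ x) ^ 2 =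
      Real.exp (-(1 / σ ^ 2 * (x - μ) ^ 2))
      - 2 * (Real.exp (-Kc) * Real.exp (-(A * (x - X) ^ 2)))
      + Real.exp (-(1 / σ ^ 2 * (ξ * x - μ) ^ 2)) := by
    intro x
    rw [dopplerDiff]
    have e1 : Real.exp (-(x - μ) ^ 2 / (2 * σ ^ 2)) * Real.exp (-(x - μ) ^ 2 / (2 * σ ^ 2))
        = Real.exp (-(1 / σ ^ 2 * (x - μ) ^ 2)) := by
      rw [← Real.exp_add]; congr 1; field_simp; ring
    have e2 : Real.exp (-(x - μ) ^ 2 / (2 * σ ^ 2)) * Real.exp (-(ξ * x - μ) ^ 2 / (2 * σ ^ 2))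
        = Real.exp (-Kc) * Real.exp (-(A * (x - X) ^ 2)) := by
      rw [← Real.exp_add, ← Real.exp_add]; congr 1; rw [hKc, hA, hX]; field_simp; ring
    have e3 : Real.exp (-(ξ * x - μ) ^ 2 / (2 * σ ^ 2)) * Real.exp (-(ξ * x - μ) ^ 2 / (2 * σ ^ 2))
        = Real.exp (-(1 / σ ^ 2 * (ξ * x - μ) ^ 2)) := by
      rw [← Real.exp_add]; congr 1; field_simp; ring
    linear_combination e1 - 2 * e2 + e3
  have I1 : Integrable (fun x : ℝ => Real.exp (-(1 / σ ^ 2 * (x - μ) ^ 2))) :=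
    integrable_gauss_shift hc1 μ
  have I2 : Integrable (fun x : ℝ =>
      2 * (Real.exp (-Kc) * Real.exp (-(A * (x - X) ^ 2)))) :=
    ((integrable_gauss_shift hc2 X).const_mul _).const_mul 2
  have I3 : Integrable (fun x : ℝ => Real.exp (-(1 / σ ^ 2 * (ξ * x - μ) ^ 2))) := by
    have := ((integrable_gauss_shift hc1 μ).comp_mul_left' hξ.ne')
    simpa using this
  have h3 : (∫ x : ℝ, Real.exp (-(1 / σ ^ 2 * (ξ * x - μ) ^ 2)))
      = |ξ⁻¹| • ∫ y : ℝ, Real.exp (-(1 / σ ^ 2 * (y - μ) ^ 2)) := by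
    have := MeasureTheory.Measure.integral_comp_mul_left
      (fun y : ℝ => Real.exp (-(1 / σ ^ 2 * (y - μ) ^ 2))) ξ
    simpa using this
  have I12 : Integrable (fun x : ℝ => Real.exp (-(1 / σ ^ 2 * (x - μ) ^ 2))
      - 2 * (Real.exp (-Kc) * Real.exp (-(A * (x - X) ^ 2)))) := I1.sub I2
  simp only [key]
  rw [integral_add I12 I3, integral_sub I1 I2, h3,
    integral_const_mul, integral_const_mul, integral_gauss_shift hc1,
    integral_gauss_shift hc2,
    abs_of_pos (inv_pos.mpr hξ), smul_eq_mul]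
  ring

open Filter

noncomputable def sFn (ξ : ℝ) : ℝ := Real.sqrt (2 / (1 + ξ ^ 2))

noncomputable def kFn (μ σ ξ : ℝ) : ℝ := μ ^ 2 * (1 - ξ) ^ 2 / (2 * σ ^ 2 * (1 + ξ ^ 2))

noncomputable def numFn (μ σ ξ : ℝ) : ℝ :=
  (2 * (Real.sqrt (σ * 2 * Real.sqrt π))⁻¹ / σ * Real.exp (-(kFn μ σ ξ)) *
    (μ * ξ / (1 + ξ ^ 2)) * Real.sqrt (π / ((1 + ξ ^ 2) / (2 * σ ^ 2)))) ^ 2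

noncomputable def denFn (μ σ ξ : ℝ) : ℝ :=
  Real.sqrt (π / (1 / σ ^ 2)) *
      ((ξ ^ 2 + 4 * ξ + 1) / (ξ ^ 2 * (1 + ξ ^ 2) * ((1 + ξ) / ξ + 2 * sFn ξ)))
    + 2 * (Real.sqrt (π / (1 / σ ^ 2)) * sFn ξ) *
      ((1 - Real.exp (-(kFn μ σ ξ))) / kFn μ σ ξ) * (μ ^ 2 / (2 * σ ^ 2 * (1 + ξ ^ 2)))

lemma c1_sq_factor (μ σ : ℝ) (hσ : 0 < σ) (ξ : ℝ) :
    (hgCoeff 1 μ σ ξ) ^ 2 = numFn μ σ ξ * (1 - ξ) ^ 2 := by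
  have h1ξ : (0:ℝ) < 1 + ξ ^ 2 := by positivity
  rw [hgCoeff_one_eq μ σ hσ ξ]
  have hfac : -μ + 1 * (μ * (1 + ξ) / (1 + ξ ^ 2)) = μ * ξ / (1 + ξ ^ 2) * (1 - ξ) := by
    field_simp; ring
  rw [hfac, numFn, kFn]
  ring

lemma norm_factor (μ σ : ℝ) (hσ : 0 < σ) (hμ : μ ≠ 0) {ξ : ℝ} (hξ : 0 < ξ) (hξ1 : ξ ≠ 1) :
    ∫ x : ℝ, (dopplerDiff μ σ ξ x) ^ 2 = denFn μ σ ξ * (1 - ξ) ^ 2 := by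
  have h1ξ : (0:ℝ) < 1 + ξ ^ 2 := by positivity
  have hσ2 : (0:ℝ) < σ ^ 2 := by positivity
  have hξ0 : ξ ≠ 0 := ne_of_gt hξ
  rw [norm_sq_eq μ σ hσ hξ]
  set S : ℝ := Real.sqrt (π / (1 / σ ^ 2)) with hS
  set s : ℝ := sFn ξ with hs
  have hs2 : s ^ 2 = 2 / (1 + ξ ^ 2) := Real.sq_sqrt (by positivity)
  have hspos : 0 < s := Real.sqrt_pos.mpr (by positivity)
  have hqpos : 0 < (1 + ξ) / ξ + 2 * s := by positivity
  have hKne : kFn μ σ ξ ≠ 0 := by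
    rw [kFn]
    have h1 : (1 - ξ) ≠ 0 := sub_ne_zero.mpr (Ne.symm hξ1)
    positivity
  -- the sqrt of π/A equals S * s
  have hsqrtA : Real.sqrt (π / ((1 + ξ ^ 2) / (2 * σ ^ 2))) = S * s := by
    rw [hS, hs, sFn, ← Real.sqrt_mul (by positivity)]
    congr 1
    field_simp
  -- algebraic identity (part a)
  have hs2' : s ^ 2 * (1 + ξ ^ 2) = 2 := by rw [hs2]; field_simp
  have key1 : (1 + ξ) / ξ - 2 * s =
      (ξ ^ 2 + 4 * ξ + 1) / (ξ ^ 2 * (1 + ξ ^ 2) * ((1 + ξ) / ξ + 2 * s)) * (1 - ξ) ^ 2 := by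
    rw [div_mul_eq_mul_div, eq_div_iff (by positivity)]
    field_simp
    linear_combination (-4 * ξ ^ 2) * hs2'
  -- exp part (part b)
  have hb : (1 - Real.exp (-(kFn μ σ ξ))) / kFn μ σ ξ * (μ ^ 2 / (2 * σ ^ 2 * (1 + ξ ^ 2)))
      * (1 - ξ) ^ 2 = 1 - Real.exp (-(kFn μ σ ξ)) := by
    have hKval : μ ^ 2 / (2 * σ ^ 2 * (1 + ξ ^ 2)) * (1 - ξ) ^ 2 = kFn μ σ ξ := by
      rw [kFn]; ring
    rw [mul_assoc, hKval, div_mul_cancel₀ _ hKne]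
  have hsum : S + ξ⁻¹ * S = S * ((1 + ξ) / ξ) := by field_simp; ring
  have hKdef : μ ^ 2 * (1 - ξ) ^ 2 / (2 * σ ^ 2 * (1 + ξ ^ 2)) = kFn μ σ ξ := rfl
  rw [hsqrtA, hKdef, denFn, ← hS, ← hs]
  linear_combination hsum + S * key1 - 2 * S * s * hb

lemma tendsto_one_sub_exp_neg_div :
    Tendsto (fun u : ℝ => (1 - Real.exp (-u)) / u) (nhdsWithin 0 {(0:ℝ)}ᶜ) (nhds 1) := by
  have hd : HasDerivAt (fun u : ℝ => 1 - Real.exp (-u)) 1 0 := by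
    have h1 : HasDerivAt (fun u : ℝ => -u) (-1) 0 := (hasDerivAt_id (0:ℝ)).neg
    have h2 := h1.exp
    have h3 := h2.const_sub 1
    norm_num at h3
    exact h3
  have h := hasDerivAt_iff_tendsto_slope.mp hd
  refine h.congr fun u => ?_
  simp [slope_def_field]

lemma tendsto_numFn (μ σ : ℝ) (hσ : 0 < σ) :
    Tendsto (numFn μ σ) (nhdsWithin 1 {(1:ℝ)}ᶜ) (nhds (μ ^ 2 * Real.sqrt π / (2 * σ))) := by
  have hσ2 : (0:ℝ) < σ ^ 2 := by positivity
  have hKc : ContinuousAt (kFn μ σ) 1 := by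
    apply ContinuousAt.div (by fun_prop) (by fun_prop)
    norm_num; positivity
  have hcont : ContinuousAt (numFn μ σ) 1 := by
    apply ContinuousAt.pow
    apply ContinuousAt.mul
    apply ContinuousAt.mul
    · exact continuousAt_const.mul (Real.continuous_exp.continuousAt.comp hKc.neg)
    · exact ContinuousAt.div (by fun_prop) (by fun_prop) (by norm_num)
    · apply Real.continuous_sqrt.continuousAt.comp
      apply ContinuousAt.div continuousAt_const (by fun_prop)
      norm_num; positivity
  have hval : numFn μ σ 1 = μ ^ 2 * Real.sqrt π / (2 * σ) := by
    have h1 : kFn μ σ 1 = 0 := by rw [kFn]; norm_num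
    have h2 : π / ((1 + (1:ℝ) ^ 2) / (2 * σ ^ 2)) = π * σ ^ 2 := by
      norm_num; field_simp
    have h3 : Real.sqrt (π * σ ^ 2) = Real.sqrt π * σ := by
      rw [Real.sqrt_mul pi_pos.le, Real.sqrt_sq hσ.le]
    have hC2 : ((Real.sqrt (σ * 2 * Real.sqrt π))⁻¹) ^ 2 = (σ * 2 * Real.sqrt π)⁻¹ := by
      rw [inv_pow, Real.sq_sqrt (by positivity)]
    have hsπ : (0:ℝ) < Real.sqrt π := Real.sqrt_pos.mpr pi_pos
    have hππ : Real.sqrt π * Real.sqrt π = π := Real.mul_self_sqrt pi_pos.le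
    rw [numFn, h1, h2, h3]
    rw [neg_zero, Real.exp_zero]
    have hC0 : (0:ℝ) < Real.sqrt (σ * 2 * Real.sqrt π) := Real.sqrt_pos.mpr (by positivity)
    have hC2' : Real.sqrt (σ * 2 * Real.sqrt π) ^ 2 = σ * 2 * Real.sqrt π :=
      Real.sq_sqrt (by positivity)
    set c := Real.sqrt (σ * 2 * Real.sqrt π) with hcdef
    set r := Real.sqrt π with hrdef
    have hc0 : c ≠ 0 := ne_of_gt hC0
    have hσ0 : σ ≠ 0 := ne_of_gt hσ
    field_simp
    linear_combination (-4 * μ ^ 2) * hC2'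
  rw [← hval]
  exact hcont.tendsto.mono_left nhdsWithin_le_nhds

lemma tendsto_denFn (μ σ : ℝ) (hσ : 0 < σ) (hμ : μ ≠ 0) :
    Tendsto (denFn μ σ) (nhdsWithin 1 {(1:ℝ)}ᶜ)
      (nhds (Real.sqrt (π / (1 / σ ^ 2)) * (3 / 4 + μ ^ 2 / (2 * σ ^ 2)))) := by
  have hσ2 : (0:ℝ) < σ ^ 2 := by positivity
  set S : ℝ := Real.sqrt (π / (1 / σ ^ 2)) with hS
  -- continuity of sFn at 1, with value 1
  have hsFn : ContinuousAt sFn 1 := by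
    apply Real.continuous_sqrt.continuousAt.comp
    apply ContinuousAt.div continuousAt_const (by fun_prop)
    norm_num
  have hsFn1 : sFn 1 = 1 := by rw [sFn]; norm_num
  -- K tendsto in punctured nbhd of 0
  have hKc : ContinuousAt (kFn μ σ) 1 := by
    apply ContinuousAt.div (by fun_prop) (by fun_prop)
    norm_num; positivity
  have hK1 : kFn μ σ 1 = 0 := by rw [kFn]; norm_num
  have hKtend : Tendsto (kFn μ σ) (nhdsWithin 1 {(1:ℝ)}ᶜ) (nhdsWithin 0 {(0:ℝ)}ᶜ) := by
    rw [tendsto_nhdsWithin_iff]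
    constructor
    · rw [← hK1]; exact hKc.tendsto.mono_left nhdsWithin_le_nhds
    · filter_upwards [self_mem_nhdsWithin] with ξ hξ
      have hξ1 : ξ ≠ 1 := hξ
      have h1ξ : (0:ℝ) < 1 + ξ ^ 2 := by positivity
      have h1 : (1 - ξ) ≠ 0 := sub_ne_zero.mpr (Ne.symm hξ1)
      simp only [Set.mem_compl_iff, Set.mem_singleton_iff]
      rw [kFn]
      positivity
  have hΨ : Tendsto (fun ξ : ℝ => (1 - Real.exp (-(kFn μ σ ξ))) / kFn μ σ ξ)
      (nhdsWithin 1 {(1:ℝ)}ᶜ) (nhds 1) :=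
    tendsto_one_sub_exp_neg_div.comp hKtend
  -- first summand
  have hT1 : Tendsto (fun ξ : ℝ => S *
      ((ξ ^ 2 + 4 * ξ + 1) / (ξ ^ 2 * (1 + ξ ^ 2) * ((1 + ξ) / ξ + 2 * sFn ξ))))
      (nhdsWithin 1 {(1:ℝ)}ᶜ) (nhds (S * (3 / 4))) := by
    have hc : ContinuousAt (fun ξ : ℝ => S *
        ((ξ ^ 2 + 4 * ξ + 1) / (ξ ^ 2 * (1 + ξ ^ 2) * ((1 + ξ) / ξ + 2 * sFn ξ)))) 1 := by
      apply continuousAt_const.mul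
      apply ContinuousAt.div (by fun_prop)
      · apply ContinuousAt.mul (by fun_prop)
        exact (ContinuousAt.div (by fun_prop) (by fun_prop) (by norm_num)).add
          (continuousAt_const.mul hsFn)
      · rw [hsFn1]; norm_num
    have hval : S * (((1:ℝ) ^ 2 + 4 * 1 + 1) /
        ((1:ℝ) ^ 2 * (1 + 1 ^ 2) * ((1 + 1) / 1 + 2 * sFn 1))) = S * (3 / 4) := by
      rw [hsFn1]; norm_num
    rw [← hval]
    exact hc.tendsto.mono_left nhdsWithin_le_nhds
  -- second summand pieces
  have hT2 : Tendsto (fun ξ : ℝ => 2 * (S * sFn ξ)) (nhdsWithin 1 {(1:ℝ)}ᶜ)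
      (nhds (2 * S)) := by
    have hc : ContinuousAt (fun ξ : ℝ => 2 * (S * sFn ξ)) 1 :=
      continuousAt_const.mul (continuousAt_const.mul hsFn)
    have : 2 * (S * sFn 1) = 2 * S := by rw [hsFn1]; ring
    rw [← this]
    exact hc.tendsto.mono_left nhdsWithin_le_nhds
  have hT3 : Tendsto (fun ξ : ℝ => μ ^ 2 / (2 * σ ^ 2 * (1 + ξ ^ 2)))
      (nhdsWithin 1 {(1:ℝ)}ᶜ) (nhds (μ ^ 2 / (4 * σ ^ 2))) := by
    have hc : ContinuousAt (fun ξ : ℝ => μ ^ 2 / (2 * σ ^ 2 * (1 + ξ ^ 2))) 1 := by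
      apply ContinuousAt.div (by fun_prop) (by fun_prop)
      norm_num; positivity
    have : μ ^ 2 / (2 * σ ^ 2 * (1 + (1:ℝ) ^ 2)) = μ ^ 2 / (4 * σ ^ 2) := by norm_num; ring_nf
    rw [← this]
    exact hc.tendsto.mono_left nhdsWithin_le_nhds
  have := hT1.add (((hT2.mul hΨ)).mul hT3)
  have hval : S * (3 / 4) + 2 * S * 1 * (μ ^ 2 / (4 * σ ^ 2))
      = S * (3 / 4 + μ ^ 2 / (2 * σ ^ 2)) := by field_simp; ring
  rw [← hval]
  exact this


open Filter in
theorem limit_c1_sq_over_norm_sq (μ σ : ℝ) (hσ : 0 < σ) (hμ : μ ≠ 0) :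
    Tendsto (fun ξ : ℝ => (hgCoeff 1 μ σ ξ) ^ 2 / ∫ x : ℝ, (dopplerDiff μ σ ξ x) ^ 2)
      (nhdsWithin 1 {(1 : ℝ)}ᶜ) (nhds (1 / (1 + 3 * σ ^ 2 / (2 * μ ^ 2)))) := by
  have hσ2 : (0:ℝ) < σ ^ 2 := by positivity
  set S : ℝ := Real.sqrt (π / (1 / σ ^ 2)) with hS
  have hSpos : 0 < S := Real.sqrt_pos.mpr (by positivity)
  have hLden : (0:ℝ) < S * (3 / 4 + μ ^ 2 / (2 * σ ^ 2)) := by positivity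
  have htend := (tendsto_numFn μ σ hσ).div (tendsto_denFn μ σ hσ hμ) (ne_of_gt hLden)
  have hEq : (fun ξ : ℝ => numFn μ σ ξ / denFn μ σ ξ) =ᶠ[nhdsWithin 1 {(1:ℝ)}ᶜ]
      (fun ξ : ℝ => (hgCoeff 1 μ σ ξ) ^ 2 / ∫ x : ℝ, (dopplerDiff μ σ ξ x) ^ 2) := by
    have hpos : ∀ᶠ ξ : ℝ in nhdsWithin 1 {(1:ℝ)}ᶜ, 0 < ξ :=
      (eventually_gt_nhds one_pos).filter_mono nhdsWithin_le_nhds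
    filter_upwards [hpos, self_mem_nhdsWithin] with ξ hξpos hξne
    have hξ1 : ξ ≠ 1 := hξne
    rw [c1_sq_factor μ σ hσ ξ, norm_factor μ σ hσ hμ hξpos hξ1,
      mul_div_mul_right _ _ (pow_ne_zero 2 (sub_ne_zero.mpr (Ne.symm hξ1)))]
  have hmain := Tendsto.congr' hEq htend
  have hval : μ ^ 2 * Real.sqrt π / (2 * σ) / (S * (3 / 4 + μ ^ 2 / (2 * σ ^ 2)))
      = 1 / (1 + 3 * σ ^ 2 / (2 * μ ^ 2)) := by
    have hS' : S = σ * Real.sqrt π := by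
      rw [hS, show π / (1 / σ ^ 2) = π * σ ^ 2 by field_simp,
        Real.sqrt_mul pi_pos.le, Real.sqrt_sq hσ.le]
      ring
    have hsπ : 0 < Real.sqrt π := Real.sqrt_pos.mpr pi_pos
    rw [hS']
    set r := Real.sqrt π with hrdef
    have hμ2 : (0:ℝ) < μ ^ 2 := by positivity
    have hr0 : r ≠ 0 := ne_of_gt hsπ
    have hσ0 : σ ≠ 0 := ne_of_gt hσ
    have hμ0 : μ ≠ 0 := hμ
    field_simp
    ring
  rw [← hval]
  exact hmain
end
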